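/- For every x > 0 and b ≥ 0, ∫₀^b Γ(0, x, z) dz = e^{-x} - Γ(1, x, b). -/

import Mathlib

open MeasureTheory Real

/-- Generalized incomplete gamma function `Γ(a, x, b) = ∫ₓ^∞ t^{a-1} e^{-t} e^{-b/t} dt`. -/
noncomputable def genGamma (a x b : ℝ) : ℝ :=
  ∫ t in Set.Ioi x, t ^ (a - 1) * Real.exp (-t) * Real.exp (-b / t)

lemma aux_inner (b t : ℝ) (ht : 0 < t) :
    ∫ z in (0:ℝ)..b, Real.exp (-z / t) = t * (1 - Real.exp (-b / t)) := by
  have hder : ∀ z ∈ Set.uIcc (0:ℝ) b,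
      HasDerivAt (fun z => -t * Real.exp (-z / t)) (Real.exp (-z / t)) z := by
    intro z _
    have h1 : HasDerivAt (fun z : ℝ => -z / t) (-1 / t) z := by
      simpa using ((hasDerivAt_id z).neg.div_const t)
    have h2 := (Real.hasDerivAt_exp (-z / t)).comp z h1
    have h3 := h2.const_mul (-t)
    refine h3.congr_deriv ?_
    field_simp
  rw [intervalIntegral.integral_eq_sub_of_hasDerivAt hder ?_]
  · simp only [neg_zero, zero_div, Real.exp_zero]
    ring
  · exact (Real.continuous_exp.comp ((continuous_id.neg).div_const t)).intervalIntegrable 0 b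

theorem integral_genGamma_zero (x b : ℝ) (hx : 0 < x) (hb : 0 ≤ b) :
    ∫ z in (0 : ℝ)..b, genGamma 0 x z = Real.exp (-x) - genGamma 1 x b := by
  have hexp : IntegrableOn (fun t => Real.exp (-t)) (Set.Ioi x) := by
    simpa using exp_neg_integrableOn_Ioi x one_pos
  have hg : IntegrableOn (fun t => t⁻¹ * Real.exp (-t)) (Set.Ioi x) := by
    refine (hexp.const_mul x⁻¹).mono' ?_ ?_
    · exact (measurable_inv.mul (measurable_id.neg.exp)).aestronglyMeasurable
    · filter_upwards [ae_restrict_mem measurableSet_Ioi] with t ht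
      have ht0 : 0 < t := hx.trans ht
      rw [Real.norm_eq_abs, abs_of_nonneg (by positivity)]
      exact mul_le_mul_of_nonneg_right (by
        exact inv_anti₀ hx (le_of_lt ht)) (Real.exp_pos _).le
  have hfb : IntegrableOn (fun t => Real.exp (-t) * Real.exp (-b / t)) (Set.Ioi x) := by
    refine hexp.mono' ?_ ?_
    · exact ((measurable_id.neg.exp).mul
        (((measurable_const (a := -b)).div measurable_id).exp)).aestronglyMeasurable
    · filter_upwards [ae_restrict_mem measurableSet_Ioi] with t ht
      have ht0 : 0 < t := hx.trans ht
      rw [Real.norm_eq_abs, abs_of_nonneg (by positivity)]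
      have : Real.exp (-b / t) ≤ 1 := by
        apply Real.exp_le_one_iff.mpr
        have : 0 ≤ b / t := div_nonneg hb ht0.le
        simpa [neg_div] using neg_nonpos_of_nonneg this
      calc Real.exp (-t) * Real.exp (-b / t) ≤ Real.exp (-t) * 1 :=
            mul_le_mul_of_nonneg_left this (Real.exp_pos _).le
        _ = Real.exp (-t) := mul_one _
  -- rewrite genGamma 0
  have h0 : ∀ z, genGamma 0 x z = ∫ t in Set.Ioi x, t⁻¹ * Real.exp (-t) * Real.exp (-z / t) := by
    intro z
    unfold genGamma
    refine setIntegral_congr_fun measurableSet_Ioi ?_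
    intro t ht
    have ht0 : 0 < t := hx.trans ht
    have h : t ^ ((0:ℝ) - 1) = t⁻¹ := by
      rw [zero_sub, Real.rpow_neg ht0.le, Real.rpow_one]
    simp only [h]
  have h1 : genGamma 1 x b = ∫ t in Set.Ioi x, Real.exp (-t) * Real.exp (-b / t) := by
    unfold genGamma
    refine setIntegral_congr_fun measurableSet_Ioi ?_
    intro t ht
    have h : t ^ ((1:ℝ) - 1) = 1 := by rw [sub_self, Real.rpow_zero]
    simp only [h, one_mul]
  haveI : IsFiniteMeasure (volume.restrict (Set.Ioc (0:ℝ) b)) :=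
    ⟨by rw [Measure.restrict_apply_univ]; exact measure_Ioc_lt_top⟩
  -- Fubini
  set μ := volume.restrict (Set.Ioc (0:ℝ) b)
  set ν := volume.restrict (Set.Ioi x)
  have hF : Integrable (Function.uncurry fun z t => t⁻¹ * Real.exp (-t) * Real.exp (-z / t))
      (μ.prod ν) := by
    have hGint : Integrable (fun p : ℝ × ℝ => (1:ℝ) * (p.2⁻¹ * Real.exp (-p.2))) (μ.prod ν) :=
      (integrable_const 1).mul_prod hg
    refine hGint.mono' ?_ ?_
    · exact ((measurable_snd.inv.mul measurable_snd.neg.exp).mul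
        ((measurable_fst.neg.div measurable_snd).exp)).aestronglyMeasurable
    · have : μ.prod ν = (volume.prod volume).restrict (Set.Ioc (0:ℝ) b ×ˢ Set.Ioi x) := by
        rw [Measure.prod_restrict]
      rw [this]
      filter_upwards [ae_restrict_mem (measurableSet_Ioc.prod measurableSet_Ioi)] with p hp
      obtain ⟨hp1, hp2⟩ := hp
      have ht0 : 0 < p.2 := hx.trans hp2
      have hz0 : 0 ≤ p.1 := hp1.1.le
      have hle : Real.exp (-p.1 / p.2) ≤ 1 := by
        apply Real.exp_le_one_iff.mpr
        have : 0 ≤ p.1 / p.2 := div_nonneg hz0 ht0.le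
        simpa [neg_div] using neg_nonpos_of_nonneg this
      have hnn : 0 ≤ p.2⁻¹ * Real.exp (-p.2) * Real.exp (-p.1 / p.2) :=
        mul_nonneg (mul_nonneg (inv_nonneg.mpr ht0.le) (Real.exp_pos _).le) (Real.exp_pos _).le
      simp only [Function.uncurry]
      rw [Real.norm_eq_abs, abs_of_nonneg hnn, one_mul]
      calc p.2⁻¹ * Real.exp (-p.2) * Real.exp (-p.1 / p.2)
          ≤ p.2⁻¹ * Real.exp (-p.2) * 1 :=
            mul_le_mul_of_nonneg_left hle (mul_nonneg (inv_nonneg.mpr ht0.le) (Real.exp_pos _).le)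
        _ = p.2⁻¹ * Real.exp (-p.2) := mul_one _
  have hswap := MeasureTheory.integral_integral_swap hF
  -- assemble
  rw [intervalIntegral.integral_of_le hb]
  calc ∫ z in Set.Ioc (0:ℝ) b, genGamma 0 x z
      = ∫ z in Set.Ioc (0:ℝ) b, ∫ t in Set.Ioi x,
          t⁻¹ * Real.exp (-t) * Real.exp (-z / t) := by
        refine setIntegral_congr_fun measurableSet_Ioc fun z _ => h0 z
    _ = ∫ t in Set.Ioi x, ∫ z in Set.Ioc (0:ℝ) b,
          t⁻¹ * Real.exp (-t) * Real.exp (-z / t) := hswap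
    _ = ∫ t in Set.Ioi x, Real.exp (-t) - Real.exp (-t) * Real.exp (-b / t) := by
        refine setIntegral_congr_fun measurableSet_Ioi fun t ht => ?_
        have ht0 : 0 < t := hx.trans ht
        rw [MeasureTheory.integral_const_mul, ← intervalIntegral.integral_of_le hb,
          aux_inner b t ht0]
        field_simp
    _ = Real.exp (-x) - genGamma 1 x b := by
        rw [integral_sub hexp hfb, integral_exp_neg_Ioi, h1]
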